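/- The function J : [0,∞) × [0,1] → [0,∞] defined by J(κ,ρ) := ρ(1−ρ)·Ψ(κ/(ρ(1−ρ))) for ρ ∈ (0,1), with J(κ,0) = J(κ,1) = ∞ for κ > 0 and J(0,0) = J(0,1) = 0, is convex (jointly in (κ,ρ)). -/

import Mathlib

open scoped ENNReal

/-- The truncated Poisson rate function `Ψ(λ) = λ log(max λ 1) − (max λ 1 − 1)`. -/
noncomputable def trPoisson (l : ℝ) : ℝ := l * Real.log (max l 1) - (max l 1 - 1)

/-- The rate density `J(κ,ρ) = ρ(1−ρ)·Ψ(κ/(ρ(1−ρ)))`, with boundary conventions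
`J(κ,0) = J(κ,1) = ∞` for `κ > 0` and `J(0,0) = J(0,1) = 0`. -/
noncomputable def rateJ (κ ρ : ℝ) : ℝ≥0∞ :=
  if ρ = 0 ∨ ρ = 1 then (if κ = 0 then 0 else ⊤)
  else ENNReal.ofReal (ρ * (1 - ρ) * trPoisson (κ / (ρ * (1 - ρ))))

lemma pointwise_le (κ m α : ℝ) (hκ : 0 ≤ κ) (hm : 0 < m) (hα : 0 ≤ α) :
    κ * α - m * (Real.exp α - 1) ≤ m * trPoisson (κ / m) := by
  unfold trPoisson
  set l := κ / m with hl
  have hl0 : 0 ≤ l := div_nonneg hκ hm.le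
  have hml : m * l = κ := by rw [hl]; field_simp [hm.ne']
  rcases le_or_gt l 1 with h | h
  · rw [max_eq_right h]
    simp only [Real.log_one]
    have h1 := Real.add_one_le_exp α
    nlinarith [mul_nonneg hκ hα, mul_le_mul_of_nonneg_right (mul_le_mul_of_nonneg_left h hm.le) hα]
  · rw [max_eq_left h.le]
    have hlpos : 0 < l := lt_trans one_pos h
    have h1 := Real.add_one_le_exp (α - Real.log l)
    rw [Real.exp_sub, Real.exp_log hlpos] at h1
    have h2 : l * (α - Real.log l + 1) ≤ Real.exp α := by
      have := mul_le_mul_of_nonneg_left h1 hlpos.le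
      rwa [mul_div_cancel₀ _ (ne_of_gt hlpos)] at this
    nlinarith [mul_le_mul_of_nonneg_left h2 hm.le]

lemma witness (κ m : ℝ) (hm : 0 < m) :
    ∃ α, 0 ≤ α ∧ m * trPoisson (κ / m) = κ * α - m * (Real.exp α - 1) := by
  set l := κ / m with hl
  have hml : m * l = κ := by rw [hl]; field_simp [hm.ne']
  refine ⟨Real.log (max l 1), Real.log_nonneg (le_max_right _ _), ?_⟩
  have hM : (0:ℝ) < max l 1 := lt_of_lt_of_le one_pos (le_max_right _ _)
  rw [trPoisson, Real.exp_log hM]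
  linear_combination (Real.log (max l 1)) * hml

lemma ofReal_mul_le' (t a : ℝ) (ht : 0 ≤ t) :
    ENNReal.ofReal (t * a) ≤ ENNReal.ofReal t * ENNReal.ofReal a := by
  rcases le_or_gt 0 a with h | h
  · rw [ENNReal.ofReal_mul ht]
  · rw [ENNReal.ofReal_of_nonpos (mul_nonpos_of_nonneg_of_nonpos ht h.le)]
    exact zero_le

lemma single_le (κ ρ α : ℝ) (hκ : 0 ≤ κ) (hρ : ρ ∈ Set.Icc (0:ℝ) 1) (hα : 0 ≤ α) :
    ENNReal.ofReal (κ * α - ρ * (1 - ρ) * (Real.exp α - 1)) ≤ rateJ κ ρ := by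
  rw [rateJ]
  by_cases hb : ρ = 0 ∨ ρ = 1
  · rw [if_pos hb]
    have hm0 : ρ * (1 - ρ) = 0 := by rcases hb with h | h <;> simp [h]
    by_cases hκ0 : κ = 0
    · simp [hκ0, hm0]
    · rw [if_neg hκ0]; exact le_top
  · rw [if_neg hb]
    push_neg at hb
    have hm : 0 < ρ * (1 - ρ) :=
      mul_pos (lt_of_le_of_ne hρ.1 (Ne.symm hb.1))
        (by have := lt_of_le_of_ne hρ.2 hb.2; linarith)
    exact ENNReal.ofReal_le_ofReal (pointwise_le κ _ α hκ hm hα)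

/-- The function `J : [0,∞) × [0,1] → [0,∞]` is jointly convex. -/
theorem stmt2 (κ₁ κ₂ ρ₁ ρ₂ t : ℝ) (hκ₁ : 0 ≤ κ₁) (hκ₂ : 0 ≤ κ₂)
    (hρ₁ : ρ₁ ∈ Set.Icc (0:ℝ) 1) (hρ₂ : ρ₂ ∈ Set.Icc (0:ℝ) 1)
    (ht : t ∈ Set.Icc (0:ℝ) 1) :
    rateJ (t * κ₁ + (1 - t) * κ₂) (t * ρ₁ + (1 - t) * ρ₂) ≤
      ENNReal.ofReal t * rateJ κ₁ ρ₁ + ENNReal.ofReal (1 - t) * rateJ κ₂ ρ₂ := by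
  obtain ⟨ht0, ht1⟩ := ht
  obtain ⟨hρ₁0, hρ₁1⟩ := hρ₁
  obtain ⟨hρ₂0, hρ₂1⟩ := hρ₂
  have ht1' : 0 ≤ 1 - t := by linarith
  set κc := t * κ₁ + (1 - t) * κ₂ with hκc
  set ρc := t * ρ₁ + (1 - t) * ρ₂ with hρc
  have hκc0 : 0 ≤ κc := add_nonneg (mul_nonneg ht0 hκ₁) (mul_nonneg ht1' hκ₂)
  by_cases hb : ρc = 0 ∨ ρc = 1
  · rw [rateJ, if_pos hb]
    by_cases hκ0 : κc = 0
    · rw [if_pos hκ0]; exact zero_le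
    · rw [if_neg hκ0]
      have hκcpos : 0 < κc := lt_of_le_of_ne hκc0 (Ne.symm hκ0)
      -- one of the two weighted κ's is positive
      have hcase : (0 < t ∧ 0 < κ₁) ∨ (0 < 1 - t ∧ 0 < κ₂) := by
        by_contra hc
        push_neg at hc
        obtain ⟨h1, h2⟩ := hc
        have e1 : t * κ₁ = 0 := by
          rcases lt_or_eq_of_le ht0 with h | h
          · rcases lt_or_eq_of_le hκ₁ with h' | h'
            · exact absurd h' (not_lt.2 (by linarith [h1 h]))
            · rw [← h']; ring
          · rw [← h]; ring
        have e2 : (1 - t) * κ₂ = 0 := by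
          rcases lt_or_eq_of_le ht1' with h | h
          · rcases lt_or_eq_of_le hκ₂ with h' | h'
            · exact absurd h' (not_lt.2 (by linarith [h2 h]))
            · rw [← h']; ring
          · rw [← h]; ring
        rw [hκc, e1, e2] at hκcpos; linarith
      -- the corresponding ρ is at the boundary
      have hbdry : ∀ s : ℝ, 0 < s → (s = t ∨ s = 1 - t) →
          (s = t → ρ₁ = 0 ∨ ρ₁ = 1) ∧ (s = 1 - t → ρ₂ = 0 ∨ ρ₂ = 1) := by
        intro s hs _
        constructor
        · intro hst
          rcases hb with h | h
          · left
            have h1 : 0 ≤ t * ρ₁ := mul_nonneg ht0 hρ₁0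
            have h2 : 0 ≤ (1 - t) * ρ₂ := mul_nonneg ht1' hρ₂0
            have : t * ρ₁ = 0 := by rw [hρc] at h; linarith
            rcases mul_eq_zero.1 this with h' | h'
            · exfalso; rw [hst] at hs; linarith
            · exact h'
          · right
            have h1 : 0 ≤ t * (1 - ρ₁) := mul_nonneg ht0 (by linarith)
            have h2 : 0 ≤ (1 - t) * (1 - ρ₂) := mul_nonneg ht1' (by linarith)
            have hsum : t * (1 - ρ₁) + (1 - t) * (1 - ρ₂) = 0 := by
              rw [hρc] at h; ring_nf; ring_nf at h; linarith
            have : t * (1 - ρ₁) = 0 := by linarith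
            rcases mul_eq_zero.1 this with h' | h'
            · exfalso; rw [hst] at hs; linarith
            · linarith
        · intro hst
          rcases hb with h | h
          · left
            have h1 : 0 ≤ t * ρ₁ := mul_nonneg ht0 hρ₁0
            have h2 : 0 ≤ (1 - t) * ρ₂ := mul_nonneg ht1' hρ₂0
            have : (1 - t) * ρ₂ = 0 := by rw [hρc] at h; linarith
            rcases mul_eq_zero.1 this with h' | h'
            · exfalso; rw [hst] at hs; linarith
            · exact h'
          · right
            have h1 : 0 ≤ t * (1 - ρ₁) := mul_nonneg ht0 (by linarith)
            have h2 : 0 ≤ (1 - t) * (1 - ρ₂) := mul_nonneg ht1' (by linarith)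
            have hsum : t * (1 - ρ₁) + (1 - t) * (1 - ρ₂) = 0 := by
              rw [hρc] at h; linarith [h]
            have : (1 - t) * (1 - ρ₂) = 0 := by linarith
            rcases mul_eq_zero.1 this with h' | h'
            · exfalso; rw [hst] at hs; linarith
            · linarith
      rcases hcase with ⟨htpos, hκ₁pos⟩ | ⟨htpos, hκ₂pos⟩
      · have hρb : ρ₁ = 0 ∨ ρ₁ = 1 := (hbdry t htpos (Or.inl rfl)).1 rfl
        have : rateJ κ₁ ρ₁ = ⊤ := by
          rw [rateJ, if_pos hρb, if_neg (ne_of_gt hκ₁pos)]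
        rw [this, ENNReal.mul_top (by simp [ENNReal.ofReal_eq_zero]; linarith)]
        simp
      · have hρb : ρ₂ = 0 ∨ ρ₂ = 1 := (hbdry (1 - t) htpos (Or.inr rfl)).2 rfl
        have : rateJ κ₂ ρ₂ = ⊤ := by
          rw [rateJ, if_pos hρb, if_neg (ne_of_gt hκ₂pos)]
        rw [this, ENNReal.mul_top (by simp [ENNReal.ofReal_eq_zero]; linarith)]
        simp
  · rw [rateJ, if_neg hb]
    push_neg at hb
    have hρc0 : 0 ≤ ρc := add_nonneg (mul_nonneg ht0 hρ₁0) (mul_nonneg ht1' hρ₂0)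
    have hρc1 : ρc ≤ 1 := by rw [hρc]; nlinarith
    have hmc : 0 < ρc * (1 - ρc) :=
      mul_pos (lt_of_le_of_ne hρc0 (Ne.symm hb.1))
        (by have := lt_of_le_of_ne hρc1 hb.2; linarith)
    obtain ⟨α, hα, heq⟩ := witness κc (ρc * (1 - ρc)) hmc
    rw [heq]
    have hE : 0 ≤ Real.exp α - 1 := by
      have := Real.add_one_le_exp α; linarith
    have hd : 0 ≤ ρc * (1 - ρc) - (t * (ρ₁ * (1 - ρ₁)) + (1 - t) * (ρ₂ * (1 - ρ₂))) := by
      have : ρc * (1 - ρc) - (t * (ρ₁ * (1 - ρ₁)) + (1 - t) * (ρ₂ * (1 - ρ₂)))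
          = t * (1 - t) * (ρ₁ - ρ₂) ^ 2 := by rw [hρc]; ring
      rw [this]; positivity
    have h3 : κc * α - ρc * (1 - ρc) * (Real.exp α - 1) ≤
        t * (κ₁ * α - ρ₁ * (1 - ρ₁) * (Real.exp α - 1)) +
        (1 - t) * (κ₂ * α - ρ₂ * (1 - ρ₂) * (Real.exp α - 1)) := by
      nlinarith [mul_nonneg hd hE]
    calc ENNReal.ofReal (κc * α - ρc * (1 - ρc) * (Real.exp α - 1))
        ≤ ENNReal.ofReal (t * (κ₁ * α - ρ₁ * (1 - ρ₁) * (Real.exp α - 1)) +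
            (1 - t) * (κ₂ * α - ρ₂ * (1 - ρ₂) * (Real.exp α - 1))) :=
          ENNReal.ofReal_le_ofReal h3
      _ ≤ ENNReal.ofReal (t * (κ₁ * α - ρ₁ * (1 - ρ₁) * (Real.exp α - 1))) +
            ENNReal.ofReal ((1 - t) * (κ₂ * α - ρ₂ * (1 - ρ₂) * (Real.exp α - 1))) :=
          ENNReal.ofReal_add_le
      _ ≤ ENNReal.ofReal t * ENNReal.ofReal (κ₁ * α - ρ₁ * (1 - ρ₁) * (Real.exp α - 1)) +
            ENNReal.ofReal (1 - t) *
              ENNReal.ofReal (κ₂ * α - ρ₂ * (1 - ρ₂) * (Real.exp α - 1)) :=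
          add_le_add (ofReal_mul_le' _ _ ht0) (ofReal_mul_le' _ _ ht1')
      _ ≤ ENNReal.ofReal t * rateJ κ₁ ρ₁ + ENNReal.ofReal (1 - t) * rateJ κ₂ ρ₂ :=
          add_le_add (mul_le_mul_right (single_le κ₁ ρ₁ α hκ₁ ⟨hρ₁0, hρ₁1⟩ hα) _)
            (mul_le_mul_right (single_le κ₂ ρ₂ α hκ₂ ⟨hρ₂0, hρ₂1⟩ hα) _)
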